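/- For all n ≥ k ≥ 2 and r > s ≥ 1, A_k(n;r,s) ≤ m_k(n; binom(r,s), binom(r−1,s−1)) + 1. -/

import Mathlib

/-- The `(j)`-fold iterated power set of a type `α`. -/
abbrev IterSet (α : Type) : ℕ → Type
  | 0 => α
  | j + 1 => Set (IterSet α j)

/-- The generalized `S`-less relation `<_S^{(j+2)}` on the `j`-fold iterated
power set of `[n]^R` (vectors are `Fin R → Fin n`): at level `0` (i.e. `k = 2`),
`x <_S y` iff `x ℓ < y ℓ` in at least `S` coordinates; at level `j + 1`,
`F <_S F'` iff some distinguished `G ∈ F'` satisfies `H <_S G` for all `H ∈ F`. -/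
def GenRel (n R S : ℕ) : (j : ℕ) → IterSet (Fin R → Fin n) j → IterSet (Fin R → Fin n) j → Prop
  | 0, x, y => S ≤ (Finset.univ.filter fun ℓ => x ℓ < y ℓ).card
  | j + 1, F, F' => ∃ G ∈ F', ∀ H ∈ F, GenRel n R S j H G

/-- `m_k(n; R, S)`: the maximum length of a generalized `S`-increasing
sequence in the `(k-2)`-fold iterated power set of `[n]^R`. -/
noncomputable def mGen (k n R S : ℕ) : ℕ :=
  sSup {t : ℕ | ∃ f : Fin t → IterSet (Fin R → Fin n) (k - 2),
    ∀ i j : Fin t, i < j → GenRel n R S (k - 2) (f i) (f j)}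

/-- `A_k(n; r, s)`: the least `N` such that every `r`-coloring of the
`k`-element subsets of `[N]` (identified with `{0, …, N-1}`) contains a tight
monotone path with `n` edges using at most `s` colors. -/
noncomputable def colorAvoidA (k n r s : ℕ) : ℕ :=
  sInf {N : ℕ | ∀ Δ : Finset ℕ → Fin r,
    ∃ w : ℕ → ℕ, (∀ i < n + k - 2, w i < w (i + 1)) ∧ (∀ i ≤ n + k - 2, w i < N) ∧
      ((Finset.range n).image fun i => Δ ((Finset.Icc i (i + k - 1)).image w)).card ≤ s}

namespace CAux

lemma iterSet_finite (α : Type) [Finite α] : ∀ j, Finite (IterSet α j)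
  | 0 => inferInstance
  | j + 1 =>
    haveI := iterSet_finite α j
    inferInstanceAs (Finite (Set (IterSet α j)))

lemma genRel_irrefl {n R S : ℕ} (hS : 1 ≤ S) :
    ∀ j (F : IterSet (Fin R → Fin n) j), ¬ GenRel n R S j F F
  | 0, x, h => by
    simp only [GenRel] at h
    have : (Finset.univ.filter fun ℓ => x ℓ < x ℓ).card = 0 := by simp
    omega
  | j + 1, F, h => by
    obtain ⟨G, hG, hall⟩ := h
    exact genRel_irrefl hS j G (hall G hG)

noncomputable def sSetEquiv (r s : ℕ) : Fin (r.choose s) ≃ {A : Finset (Fin r) // A.card = s} :=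
  (Fintype.equivFinOfCardEq (by simp)).symm

lemma count_ge {r s : ℕ} (hs : 1 ≤ s) (hsr : s < r) (c : Fin r) :
    (r - 1).choose (s - 1) ≤
      (Finset.univ.filter fun ℓ : Fin (r.choose s) => c ∈ (sSetEquiv r s ℓ).1).card := by
  have hpos : 0 < r.choose s := Nat.choose_pos (le_of_lt hsr)
  set f : Finset (Fin r) → Fin (r.choose s) := fun B =>
    if h : B.card = s then (sSetEquiv r s).symm ⟨B, h⟩ else ⟨0, hpos⟩ with hf
  set D : Finset (Finset (Fin r)) := (Finset.univ.erase c).powersetCard (s - 1) with hD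
  have hDcard : D.card = (r - 1).choose (s - 1) := by
    rw [hD, Finset.card_powersetCard, Finset.card_erase_of_mem (Finset.mem_univ c),
      Finset.card_univ, Fintype.card_fin]
  have hmemD : ∀ A ∈ D, A ⊆ Finset.univ.erase c ∧ A.card = s - 1 := by
    intro A hA
    rw [hD, Finset.mem_powersetCard] at hA
    exact hA
  have hnotmem : ∀ A ∈ D, c ∉ A := by
    intro A hA hcA
    have := (hmemD A hA).1 hcA
    exact (Finset.mem_erase.mp this).1 rfl
  have hins : ∀ A ∈ D, (insert c A).card = s := by
    intro A hA
    rw [Finset.card_insert_of_notMem (hnotmem A hA), (hmemD A hA).2]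
    omega
  calc (r - 1).choose (s - 1) = D.card := hDcard.symm
    _ ≤ _ := by
        apply Finset.card_le_card_of_injOn (fun A => f (insert c A))
        · intro A hA
          simp only [hf, dif_pos (hins A hA)]
          simp only [Finset.mem_coe, Finset.mem_filter, Finset.mem_univ, true_and]
          rw [Equiv.apply_symm_apply]
          exact Finset.mem_insert_self c A
        · intro A hA A' hA' hAA'
          simp only [hf, dif_pos (hins A hA), dif_pos (hins A' hA')] at hAA'
          have := (sSetEquiv r s).symm.injective hAA'
          have h2 : insert c A = insert c A' := congrArg Subtype.val this
          calc A = (insert c A).erase c := (Finset.erase_insert (hnotmem A hA)).symm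
            _ = (insert c A').erase c := by rw [h2]
            _ = A' := Finset.erase_insert (hnotmem A' hA')

def consF (a : ℕ) (w : ℕ → ℕ) : ℕ → ℕ := fun i => if i = 0 then a else w (i - 1)

def shiftF (w : ℕ → ℕ) : ℕ → ℕ := fun i => w (i + 1)

lemma shift_cons (a : ℕ) (w : ℕ → ℕ) : shiftF (consF a w) = w := by
  funext i; simp [shiftF, consF]

lemma cons_shift (w : ℕ → ℕ) : consF (w 0) (shiftF w) = w := by
  funext i
  rcases Nat.eq_zero_or_pos i with h | h
  · simp [h, consF]
  · simp only [consF, shiftF, Nat.pos_iff_ne_zero.mp h, if_false]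
    congr 1; omega

def IsPathE (k N : ℕ) {r : ℕ} (Δ : Finset ℕ → Fin r) (C : Finset (Fin r))
    (t : ℕ) (e : ℕ → ℕ) (p : ℕ → ℕ) : Prop :=
  (∀ i < t + k - 2, p i < p (i + 1)) ∧ (∀ i ≤ t + k - 2, p i < N) ∧
  (∀ i < t, Δ ((Finset.Icc i (i + k - 1)).image p) ∈ C) ∧
  (∀ i < k - 1, p (t + i) = e i)

noncomputable def xVal (k N : ℕ) {r : ℕ} (Δ : Finset ℕ → Fin r) (C : Finset (Fin r))
    (e : ℕ → ℕ) : ℕ :=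
  sSup {t | ∃ p, IsPathE k N Δ C t e p}

def NoGood (k n N s : ℕ) {r : ℕ} (Δ : Finset ℕ → Fin r) : Prop :=
  ∀ w : ℕ → ℕ, (∀ i < n + k - 2, w i < w (i + 1)) → (∀ i ≤ n + k - 2, w i < N) →
    s < ((Finset.range n).image fun i => Δ ((Finset.Icc i (i + k - 1)).image w)).card

variable {k n N r s : ℕ} {Δ : Finset ℕ → Fin r} {C : Finset (Fin r)}

lemma path_lt (hk : 2 ≤ k) (hC : C.card ≤ s) (hng : NoGood k n N s Δ)
    {t : ℕ} {e p : ℕ → ℕ} (h : IsPathE k N Δ C t e p) : t < n := by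
  by_contra h'
  push_neg at h'
  obtain ⟨hinc, hbd, hcol, -⟩ := h
  have h1 : ∀ i < n + k - 2, p i < p (i + 1) := fun i hi => hinc i (by omega)
  have h2 : ∀ i ≤ n + k - 2, p i < N := fun i hi => hbd i (by omega)
  have := hng p h1 h2
  have hsub : ((Finset.range n).image fun i => Δ ((Finset.Icc i (i + k - 1)).image p)) ⊆ C := by
    intro c hc
    simp only [Finset.mem_image, Finset.mem_range] at hc
    obtain ⟨i, hi, rfl⟩ := hc
    exact hcol i (by omega)
  have := Finset.card_le_card hsub
  omega

lemma xVal_le (hk : 2 ≤ k) (hC : C.card ≤ s) (hng : NoGood k n N s Δ)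
    (e : ℕ → ℕ) : xVal k N Δ C e ≤ n - 1 := by
  apply csSup_le'
  rintro t ⟨p, hp⟩
  have := path_lt hk hC hng hp
  omega

lemma xVal_bdd (hk : 2 ≤ k) (hC : C.card ≤ s) (hng : NoGood k n N s Δ)
    (e : ℕ → ℕ) : BddAbove {t | ∃ p, IsPathE k N Δ C t e p} := by
  refine ⟨n, ?_⟩
  rintro t ⟨p, hp⟩
  exact le_of_lt (path_lt hk hC hng hp)

lemma exists_path_zero (hk : 2 ≤ k) {e : ℕ → ℕ}
    (he : ∀ i, i + 1 ≤ k - 2 → e i < e (i + 1)) (heN : ∀ i ≤ k - 2, e i < N) :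
    (0 : ℕ) ∈ {t | ∃ p, IsPathE k N Δ C t e p} := by
  refine ⟨e, ?_, ?_, ?_, ?_⟩
  · intro i hi; exact he i (by omega)
  · intro i hi; exact heN i (by omega)
  · intro i hi; omega
  · intro i hi; simp

lemma extend_path (hk : 2 ≤ k) {t : ℕ} {w p : ℕ → ℕ}
    (hw : ∀ i, i + 1 ≤ k - 1 → w i < w (i + 1)) (hwN : ∀ i ≤ k - 1, w i < N)
    (hc : Δ ((Finset.Icc 0 (k - 1)).image w) ∈ C)
    (hp : IsPathE k N Δ C t w p) :
    ∃ q, IsPathE k N Δ C (t + 1) (shiftF w) q := by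
  obtain ⟨hinc, hbd, hcol, hend⟩ := hp
  set q : ℕ → ℕ := fun i => if i = t + k - 1 then w (k - 1) else p i with hq
  have hqold : ∀ i ≤ t + k - 2, q i = p i := by
    intro i hi; simp only [hq]; rw [if_neg (by omega)]
  refine ⟨q, ?_, ?_, ?_, ?_⟩
  · intro i hi
    rcases Nat.lt_or_ge (i + 1) (t + k - 1) with h | h
    · rw [hqold i (by omega), hqold (i + 1) (by omega)]
      exact hinc i (by omega)
    · have hi1 : i + 1 = t + k - 1 := by omega
      have hit : i = t + (k - 2) := by omega
      rw [hqold i (by omega), hi1]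
      simp only [hq, if_pos rfl]
      rw [hit, hend (k - 2) (by omega)]
      have h3 := hw (k - 2) (by omega)
      rwa [show k - 2 + 1 = k - 1 by omega] at h3
  · intro i hi
    rcases eq_or_ne i (t + k - 1) with h | h
    · simp only [hq, if_pos h]; exact hwN (k - 1) le_rfl
    · simp only [hq, if_neg h]; exact hbd i (by omega)
  · intro i hi
    rcases Nat.lt_or_ge i t with h | h
    · have : (Finset.Icc i (i + k - 1)).image q = (Finset.Icc i (i + k - 1)).image p := by
        apply Finset.image_congr
        intro x hx
        simp only [Finset.coe_Icc, Set.mem_Icc] at hx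
        exact hqold x (by omega)
      rw [this]; exact hcol i h
    · have hit : i = t := by omega
      subst hit
      have h1 : Finset.Icc i (i + k - 1) = (Finset.Icc 0 (k - 1)).image (i + ·) := by
        rw [Finset.image_add_left_Icc]
        congr 1
        omega
      have h2 : (Finset.Icc i (i + k - 1)).image q = (Finset.Icc 0 (k - 1)).image w := by
        rw [h1, Finset.image_image]
        apply Finset.image_congr
        intro x hx
        simp only [Finset.coe_Icc, Set.mem_Icc] at hx
        rcases eq_or_ne x (k - 1) with h | h
        · simp only [Function.comp_apply, h, hq]
          rw [if_pos (by omega)]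
        · simp only [Function.comp_apply, hq]
          rw [if_neg (by omega)]
          exact hend x (by omega)
      rw [h2]; exact hc
  · intro i hi
    rcases eq_or_ne i (k - 2) with h | h
    · subst h
      simp only [hq]
      rw [if_pos (by omega)]
      simp only [shiftF]
      congr 1; omega
    · simp only [hq]
      rw [if_neg (by omega)]
      have := hend (i + 1) (by omega)
      rw [show t + 1 + i = t + (i + 1) by omega, this]
      simp [shiftF]

lemma xVal_lt (hk : 2 ≤ k) (hC : C.card ≤ s) (hng : NoGood k n N s Δ)
    {w : ℕ → ℕ}
    (hw : ∀ i, i + 1 ≤ k - 1 → w i < w (i + 1)) (hwN : ∀ i ≤ k - 1, w i < N)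
    (hc : Δ ((Finset.Icc 0 (k - 1)).image w) ∈ C) :
    xVal k N Δ C w < xVal k N Δ C (shiftF w) := by
  have hne : {t | ∃ p, IsPathE k N Δ C t w p}.Nonempty :=
    ⟨0, exists_path_zero hk (fun i hi => hw i (by omega)) (fun i hi => hwN i (by omega))⟩
  have hmem := Nat.sSup_mem hne (xVal_bdd hk hC hng w)
  obtain ⟨p, hp⟩ := hmem
  obtain ⟨q, hq⟩ := extend_path hk hw hwN hc hp
  have : xVal k N Δ C w + 1 ≤ xVal k N Δ C (shiftF w) :=
    le_csSup (xVal_bdd hk hC hng (shiftF w)) ⟨q, hq⟩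
  omega

noncomputable def Phi (k n N : ℕ) {r : ℕ} (s : ℕ) (Δ : Finset ℕ → Fin r) (hn : 0 < n) :
    (j : ℕ) → (ℕ → ℕ) → IterSet (Fin (r.choose s) → Fin n) j
  | 0, e => fun ℓ => ⟨min (xVal k N Δ (sSetEquiv r s ℓ).1 e) (n - 1), by omega⟩
  | j + 1, e => {F | ∃ a, a < e 0 ∧ F = Phi k n N s Δ hn j (consF a e)}

lemma xVal_congr (hk : 2 ≤ k) {e e' : ℕ → ℕ} (h : ∀ i < k - 1, e i = e' i) :
    xVal k N Δ C e = xVal k N Δ C e' := by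
  unfold xVal
  congr 1
  ext t
  constructor <;> rintro ⟨p, h1, h2, h3, h4⟩
  · exact ⟨p, h1, h2, h3, fun i hi => (h4 i hi).trans (h i hi)⟩
  · exact ⟨p, h1, h2, h3, fun i hi => (h4 i hi).trans (h i hi).symm⟩

lemma Phi_congr (hk : 2 ≤ k) (hn : 0 < n) :
    ∀ j, j ≤ k - 2 → ∀ e e' : ℕ → ℕ, (∀ i ≤ k - 2 - j, e i = e' i) →
      Phi k n N s Δ hn j e = Phi k n N s Δ hn j e'
  | 0, hj, e, e', h => by
    funext ℓ
    apply Fin.ext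
    simp only [Phi]
    rw [xVal_congr (N := N) (Δ := Δ) hk (fun i hi => h i (by omega))]
  | j + 1, hj, e, e', h => by
    simp only [Phi]
    ext F
    constructor <;> rintro ⟨a, ha, rfl⟩
    · refine ⟨a, by rw [← h 0 (by omega)]; exact ha, ?_⟩
      rw [Phi_congr hk hn j (by omega) (consF a e) (consF a e')]
      intro i hi
      rcases Nat.eq_zero_or_pos i with h0 | h0
      · simp [h0, consF]
      · simp only [consF, Nat.pos_iff_ne_zero.mp h0, if_false]
        exact h (i - 1) (by omega)
    · refine ⟨a, by rw [h 0 (by omega)]; exact ha, ?_⟩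
      rw [Phi_congr hk hn j (by omega) (consF a e) (consF a e')]
      intro i hi
      rcases Nat.eq_zero_or_pos i with h0 | h0
      · simp [h0, consF]
      · simp only [consF, Nat.pos_iff_ne_zero.mp h0, if_false]
        exact h (i - 1) (by omega)

lemma claimC (hk : 2 ≤ k) (hkn : k ≤ n) (hn : 0 < n) (hs : 1 ≤ s) (hsr : s < r)
    (hng : NoGood k n N s Δ) :
    ∀ j, j ≤ k - 2 → ∀ w : ℕ → ℕ, (∀ i, i + 1 ≤ k - 1 - j → w i < w (i + 1)) →
      (∀ i ≤ k - 1 - j, w i < N) →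
      GenRel n (r.choose s) ((r - 1).choose (s - 1)) j
        (Phi k n N s Δ hn j w) (Phi k n N s Δ hn j (shiftF w))
  | 0, hj, w, hw, hwN => by
    simp only [GenRel]
    set c := Δ ((Finset.Icc 0 (k - 1)).image w) with hc
    have hsub : (Finset.univ.filter fun ℓ : Fin (r.choose s) => c ∈ (sSetEquiv r s ℓ).1) ⊆
        Finset.univ.filter fun ℓ =>
          Phi k n N s Δ hn 0 w ℓ < Phi k n N s Δ hn 0 (shiftF w) ℓ := by
      intro ℓ hℓ
      simp only [Finset.mem_filter, Finset.mem_univ, true_and] at hℓ ⊢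
      have hCcard : ((sSetEquiv r s ℓ).1).card ≤ s := le_of_eq (sSetEquiv r s ℓ).2
      have hlt := xVal_lt (C := (sSetEquiv r s ℓ).1) hk hCcard hng
        (fun i hi => hw i (by omega)) (fun i hi => hwN i (by omega)) hℓ
      have hle := xVal_le (C := (sSetEquiv r s ℓ).1) hk hCcard hng (shiftF w)
      simp only [Phi]
      rw [Fin.mk_lt_mk]
      omega
    calc (r - 1).choose (s - 1) ≤ _ := count_ge hs hsr c
      _ ≤ _ := Finset.card_le_card hsub
  | j + 1, hj, w, hw, hwN => by
    refine ⟨Phi k n N s Δ hn j (consF (w 0) (shiftF w)), ⟨w 0, ?_, rfl⟩, ?_⟩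
    · exact hw 0 (by omega)
    · rintro H ⟨a, ha, rfl⟩
      rw [cons_shift w]
      have hIH := claimC hk hkn hn hs hsr hng j (by omega) (consF a w)
        (fun i hi => by
          rcases Nat.eq_zero_or_pos i with h0 | h0
          · subst h0
            simp only [consF, if_pos rfl, if_neg one_ne_zero]
            exact lt_of_lt_of_le ha (le_of_eq rfl)
          · simp only [consF, Nat.pos_iff_ne_zero.mp h0, if_false,
              Nat.add_one_ne_zero, if_false]
            have := hw (i - 1) (by omega)
            rwa [show i - 1 + 1 = i by omega] at this)
        (fun i hi => by
          rcases Nat.eq_zero_or_pos i with h0 | h0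
          · subst h0
            simp only [consF, if_pos rfl]
            exact lt_trans ha (lt_of_lt_of_le (hwN 0 (by omega)) le_rfl)
          · simp only [consF, Nat.pos_iff_ne_zero.mp h0, if_false]
            exact hwN (i - 1) (by omega))
      rwa [shift_cons a w] at hIH

end CAux

open CAux

/-- For all `n ≥ k ≥ 2` and `r > s ≥ 1`,
`A_k(n; r, s) ≤ m_k(n; binom(r,s), binom(r-1,s-1)) + 1`. -/
theorem colorAvoidA_le_mGen (n k r s : ℕ) (hk : 2 ≤ k) (hkn : k ≤ n)
    (hs : 1 ≤ s) (hsr : s < r) :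
    colorAvoidA k n r s ≤
      mGen k n (Nat.choose r s) (Nat.choose (r - 1) (s - 1)) + 1 := by
  set R := Nat.choose r s with hR
  set S := Nat.choose (r - 1) (s - 1) with hS
  set m := mGen k n R S with hm
  set N := m + 1 with hN
  have hn : 0 < n := by omega
  have hS1 : 1 ≤ S := Nat.choose_pos (by omega)
  apply Nat.sInf_le
  intro Δ
  by_contra hno
  push_neg at hno
  have hng : NoGood k n N s Δ := by
    intro w h1 h2
    by_contra h3
    push_neg at h3
    exact absurd h3 (by simpa using hno w h1 h2)
  -- the increasing sequence of length m + 1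
  set f : Fin N → IterSet (Fin R → Fin n) (k - 2) :=
    fun v => Phi k n N s Δ hn (k - 2) (fun i => (v : ℕ) + i) with hf
  have hincr : ∀ i j : Fin N, i < j → GenRel n R S (k - 2) (f i) (f j) := by
    intro u v huv
    set w : ℕ → ℕ := consF (u : ℕ) (fun i => (v : ℕ) + i) with hw
    have hshift : shiftF w = fun i => (v : ℕ) + i := shift_cons _ _
    have hC := claimC hk hkn hn hs hsr hng (k - 2) le_rfl w
      (fun i hi => by
        have : i = 0 := by omega
        subst this
        simp only [hw, consF, if_pos rfl, if_neg one_ne_zero]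
        simpa using huv)
      (fun i hi => by
        have : i ≤ 1 := by omega
        interval_cases i
        · simp only [hw, consF, if_pos rfl]; exact u.2
        · simp only [hw, consF, if_neg one_ne_zero]
          simpa using v.2)
    rw [hshift] at hC
    have hPhiEq : Phi k n N s Δ hn (k - 2) w = f u := by
      apply Phi_congr hk hn (k - 2) le_rfl
      intro i hi
      have : i = 0 := by omega
      subst this
      simp [hw, consF]
    rw [hPhiEq] at hC
    exact hC
  -- length bound
  haveI : Finite (IterSet (Fin R → Fin n) (k - 2)) := iterSet_finite _ _
  have hinj : Function.Injective f := by
    intro i j hij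
    by_contra hne
    rcases lt_or_gt_of_ne hne with h | h
    · exact genRel_irrefl hS1 (k - 2) (f j) (hij ▸ hincr i j h)
    · exact genRel_irrefl hS1 (k - 2) (f i) (hij ▸ hincr j i h)
  have hbddT : BddAbove {t : ℕ | ∃ g : Fin t → IterSet (Fin R → Fin n) (k - 2),
      ∀ i j : Fin t, i < j → GenRel n R S (k - 2) (g i) (g j)} := by
    refine ⟨Nat.card (IterSet (Fin R → Fin n) (k - 2)), ?_⟩
    rintro t ⟨g, hg⟩
    have hginj : Function.Injective g := by
      intro i j hij
      by_contra hne
      rcases lt_or_gt_of_ne hne with h | h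
      · exact genRel_irrefl hS1 (k - 2) (g j) (hij ▸ hg i j h)
      · exact genRel_irrefl hS1 (k - 2) (g i) (hij ▸ hg j i h)
    have := Nat.card_le_card_of_injective g hginj
    simpa using this
  have hmemT : N ∈ {t : ℕ | ∃ g : Fin t → IterSet (Fin R → Fin n) (k - 2),
      ∀ i j : Fin t, i < j → GenRel n R S (k - 2) (g i) (g j)} := ⟨f, hincr⟩
  have : N ≤ m := le_csSup hbddT hmemT
  omega
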